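/- Let v1 ≥ v2 > 0 and let m be a positive integer. A strategy profile (X, Y) with E(X) = E(Y) = m is a Nash equilibrium of the two-player all-pay auction with valuations (v1, v2) if and only if: (a) either m = ⌊v2/2⌋ = ⌊v1/2⌋, or m = ⌈v2/2⌉ − 1 = ⌈v1/2⌉ − 1, or m = ⌊v2/2⌋ = ⌈v1/2⌉ − 1; and (b) X = λ·U_O^m + (1−λ)·U_E^m and Y = κ·U_O^m + (1−κ)·U_E^m, where κ = (2m/v1)·(m + 1 − v1/2) and λ = (2m/v2)·(m + 1 − v2/2). In this case the equilibrium payoffs are P_{v1}(X, Y) = v1/2 − m and P_{v2}(Y, X) = v2/2 − m. -/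

import Mathlib

open scoped BigOperators

/-- A (mixed) strategy: a probability distribution on the nonnegative
integers with finite expectation. -/
structure Strategy where
  p : ℕ → ℝ
  nonneg : ∀ n, 0 ≤ p n
  total : HasSum p 1
  finExp : Summable fun n : ℕ => (n : ℝ) * p n

namespace Strategy

/-- Expectation of a strategy. -/
noncomputable def exp (ξ : Strategy) : ℝ := ∑' n : ℕ, (n : ℝ) * ξ.p n

end Strategy

/-- Probability that an observation from `ξ` strictly exceeds an independent
observation from `η`. -/
noncomputable def prGT (ξ η : Strategy) : ℝ :=
  ∑' n, ξ.p n * ∑ k ∈ Finset.range n, η.p k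

/-- Probability that independent observations from `ξ` and `η` are equal. -/
noncomputable def prEq (ξ η : Strategy) : ℝ := ∑' n, ξ.p n * η.p n

/-- Expected all-pay auction payoff of a player with valuation `v` playing `ξ`
against `η`:  `v·Pr(X > Y) + (v/2)·Pr(X = Y) − E(X)`. -/
noncomputable def payoff (v : ℝ) (ξ η : Strategy) : ℝ :=
  v * prGT ξ η + v / 2 * prEq ξ η - ξ.exp

/-- Nash equilibrium of the two-player all-pay auction with valuations `(v1, v2)`. -/
def IsNashAPA (v1 v2 : ℝ) (X Y : Strategy) : Prop :=
  (∀ X' : Strategy, payoff v1 X' Y ≤ payoff v1 X Y) ∧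
  (∀ Y' : Strategy, payoff v2 Y' X ≤ payoff v2 Y X)

/-- `H(ξ, η) = Pr(X > Y) − Pr(X < Y)`. -/
noncomputable def Hval (ξ η : Strategy) : ℝ := prGT ξ η - prGT η ξ

/-- Nash equilibrium of the discrete General Lotto game `Γ(b1, b2)`. -/
def IsNashLotto (b1 b2 : ℝ) (X Y : Strategy) : Prop :=
  X.exp = b1 ∧ Y.exp = b2 ∧
  (∀ X' : Strategy, X'.exp = b1 → Hval X' Y ≤ Hval X Y) ∧
  (∀ Y' : Strategy, Y'.exp = b2 → Hval Y' X ≤ Hval Y X)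

/-- `U_O^m`: uniform distribution on the odd numbers `{1, 3, …, 2m−1}` (as a pmf). -/
noncomputable def UO (m : ℕ) : ℕ → ℝ := fun n =>
  if Odd n ∧ n < 2 * m then (m : ℝ)⁻¹ else 0

/-- `U_E^m`: uniform distribution on the even numbers `{0, 2, …, 2m}` (as a pmf). -/
noncomputable def UE (m : ℕ) : ℕ → ℝ := fun n =>
  if Even n ∧ n ≤ 2 * m then ((m : ℝ) + 1)⁻¹ else 0

/-- `U_{O↑1}^m`: uniform distribution on the even numbers `{2, 4, …, 2m−2}` (as a pmf). -/
noncomputable def UOup (m : ℕ) : ℕ → ℝ := fun n =>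
  if Even n ∧ 0 < n ∧ n ≤ 2 * m - 2 then ((m : ℝ) - 1)⁻¹ else 0

/-- `δ_j`: the point mass at `j` (as a pmf). -/
noncomputable def deltaFn (j : ℕ) : ℕ → ℝ := fun n => if n = j then 1 else 0

/-- `W_j^m = (1/(2m))·δ_0 + Σ_{i=1}^{j−1}(1/m)·δ_{2i} + (1/(2m))·δ_{2j}
      + Σ_{i=j+1}^{m}(1/m)·δ_{2i−1}` (as a pmf). -/
noncomputable def Wfn (j m : ℕ) : ℕ → ℝ := fun n =>
  if n = 0 ∨ n = 2 * j then (2 * (m : ℝ))⁻¹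
  else if Even n ∧ n < 2 * j then (m : ℝ)⁻¹
  else if Odd n ∧ 2 * j < n ∧ n < 2 * m then (m : ℝ)⁻¹
  else 0

/-- `V_j^m = Σ_{i=1}^{j−1}(2/(2m+1))·δ_{2i−1} + (1/(2m+1))·δ_{2j−1}
      + Σ_{i=j}^{m}(2/(2m+1))·δ_{2i}` (as a pmf). -/
noncomputable def Vfn (j m : ℕ) : ℕ → ℝ := fun n =>
  if n = 2 * j - 1 then (2 * (m : ℝ) + 1)⁻¹
  else if Odd n ∧ n < 2 * j - 1 then 2 * (2 * (m : ℝ) + 1)⁻¹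
  else if Even n ∧ 2 * j ≤ n ∧ n ≤ 2 * m then 2 * (2 * (m : ℝ) + 1)⁻¹
  else 0

namespace APA
open Finset

/-- cdf: probability of being `< n`. -/
noncomputable def cdf (η : Strategy) (n : ℕ) : ℝ := ∑ k ∈ Finset.range n, η.p k

lemma psummable (η : Strategy) : Summable η.p := η.total.summable

lemma p_le_one (η : Strategy) (n : ℕ) : η.p n ≤ 1 :=
  le_hasSum η.total n fun j _ => η.nonneg j

lemma cdf_nonneg (η : Strategy) (n : ℕ) : 0 ≤ cdf η n :=
  Finset.sum_nonneg fun k _ => η.nonneg k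

lemma cdf_le_one (η : Strategy) (n : ℕ) : cdf η n ≤ 1 :=
  sum_le_hasSum _ (fun j _ => η.nonneg j) η.total

lemma cdf_succ (η : Strategy) (n : ℕ) : cdf η (n + 1) = cdf η n + η.p n :=
  Finset.sum_range_succ _ _

/-- pure-strategy payoff of bidding `n` against `η`, with valuation `v`. -/
noncomputable def g (v : ℝ) (η : Strategy) (n : ℕ) : ℝ :=
  v * cdf η n + v / 2 * η.p n - n

lemma summable_mul_cdf (ξ η : Strategy) : Summable fun n => ξ.p n * cdf η n := by
  refine Summable.of_nonneg_of_le (fun n => mul_nonneg (ξ.nonneg n) (cdf_nonneg η n))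
    (fun n => ?_) (psummable ξ)
  simpa using mul_le_mul_of_nonneg_left (cdf_le_one η n) (ξ.nonneg n)

lemma summable_mul_p (ξ η : Strategy) : Summable fun n => ξ.p n * η.p n := by
  refine Summable.of_nonneg_of_le (fun n => mul_nonneg (ξ.nonneg n) (η.nonneg n))
    (fun n => ?_) (psummable ξ)
  simpa using mul_le_mul_of_nonneg_left (p_le_one η n) (ξ.nonneg n)

lemma summable_mul_g (v : ℝ) (ξ η : Strategy) : Summable fun n => ξ.p n * g v η n := by
  have h : (fun n => ξ.p n * g v η n) =
      fun n => v * (ξ.p n * cdf η n) + (v / 2) * (ξ.p n * η.p n) - (n : ℝ) * ξ.p n := by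
    funext n; unfold g; ring
  rw [h]
  exact (((summable_mul_cdf ξ η).mul_left v).add ((summable_mul_p ξ η).mul_left (v/2))).sub ξ.finExp

lemma payoff_eq (v : ℝ) (ξ η : Strategy) : payoff v ξ η = ∑' n, ξ.p n * g v η n := by
  have h : ∀ n : ℕ, ξ.p n * g v η n =
      v * (ξ.p n * cdf η n) + (v / 2) * (ξ.p n * η.p n) - (n : ℝ) * ξ.p n := by
    intro n; unfold g; ring
  rw [tsum_congr h,
    Summable.tsum_sub (((summable_mul_cdf ξ η).mul_left v).add ((summable_mul_p ξ η).mul_left (v/2))) ξ.finExp,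
    Summable.tsum_add ((summable_mul_cdf ξ η).mul_left v) ((summable_mul_p ξ η).mul_left (v/2)),
    tsum_mul_left, tsum_mul_left]
  rfl

/-- the point mass at `j` as a strategy. -/
noncomputable def deltaS (j : ℕ) : Strategy where
  p := deltaFn j
  nonneg n := by unfold deltaFn; split <;> norm_num
  total := by
    have := hasSum_ite_eq j (1 : ℝ)
    show HasSum (fun n => if n = j then (1:ℝ) else 0) 1
    simpa using this
  finExp := by
    refine summable_of_ne_finset_zero (s := {j}) fun n hn => ?_
    simp only [Finset.mem_singleton] at hn
    simp [deltaFn, hn]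

lemma tsum_delta_mul (j : ℕ) (f : ℕ → ℝ) : ∑' n, deltaFn j n * f n = f j := by
  rw [tsum_eq_single j]
  · simp [deltaFn]
  · intro n hn; simp [deltaFn, hn]

lemma payoff_delta (v : ℝ) (j : ℕ) (η : Strategy) : payoff v (deltaS j) η = g v η j := by
  unfold payoff prGT prEq Strategy.exp g
  have h1 : ∑' n, (deltaS j).p n * ∑ k ∈ Finset.range n, η.p k = cdf η j := tsum_delta_mul j _
  have h2 : ∑' n, (deltaS j).p n * η.p n = η.p j := tsum_delta_mul j _
  have h3 : ∑' n : ℕ, (n : ℝ) * (deltaS j).p n = j := by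
    rw [tsum_eq_single j]
    · simp [deltaS, deltaFn]
    · intro n hn; simp [deltaS, deltaFn, hn]
  rw [h1, h2, h3]

lemma tsum_weights_le (ξ : Strategy) (f : ℕ → ℝ) (c : ℝ)
    (hf : Summable fun n => ξ.p n * f n) (hb : ∀ n, f n ≤ c) :
    ∑' n, ξ.p n * f n ≤ c := by
  have h1 : ∑' n, ξ.p n * f n ≤ ∑' n, ξ.p n * c := by
    refine Summable.tsum_le_tsum (fun n => mul_le_mul_of_nonneg_left (hb n) (ξ.nonneg n)) hf ?_
    exact (psummable ξ).mul_right c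
  have h2 : ∑' n, ξ.p n * c = c := by
    rw [tsum_mul_right, ξ.total.tsum_eq, one_mul]
  linarith

lemma nash_iff (v1 v2 : ℝ) (X Y : Strategy) :
    IsNashAPA v1 v2 X Y ↔
      (∀ n, g v1 Y n ≤ payoff v1 X Y) ∧ (∀ n, g v2 X n ≤ payoff v2 Y X) := by
  constructor
  · rintro ⟨h1, h2⟩
    exact ⟨fun n => payoff_delta v1 n Y ▸ h1 (deltaS n),
           fun n => payoff_delta v2 n X ▸ h2 (deltaS n)⟩
  · rintro ⟨h1, h2⟩
    constructor
    · intro X'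
      rw [payoff_eq v1 X' Y]
      exact tsum_weights_le X' _ _ (summable_mul_g v1 X' Y) h1
    · intro Y'
      rw [payoff_eq v2 Y' X]
      exact tsum_weights_le Y' _ _ (summable_mul_g v2 Y' X) h2

end APA
namespace APA
open Finset Filter

lemma summable_sq (η : Strategy) : Summable fun n => η.p n * (2 * cdf η n + η.p n) := by
  refine Summable.of_nonneg_of_le
    (fun n => mul_nonneg (η.nonneg n) (by nlinarith [cdf_nonneg η n, η.nonneg n]))
    (fun n => ?_) ((psummable η).mul_left 3)
  have h1 : 2 * cdf η n + η.p n ≤ 3 := by nlinarith [cdf_le_one η n, p_le_one η n]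
  nlinarith [η.nonneg n]

lemma tsum_sq (η : Strategy) : ∑' n, η.p n * (2 * cdf η n + η.p n) = 1 := by
  have hpart : ∀ N : ℕ, ∑ n ∈ range N, η.p n * (2 * cdf η n + η.p n) = (cdf η N) ^ 2 := by
    intro N
    induction N with
    | zero => simp [cdf]
    | succ N ih => rw [Finset.sum_range_succ, ih, cdf_succ]; ring
  have h1 : Tendsto (fun N => ∑ n ∈ range N, η.p n * (2 * cdf η n + η.p n)) atTop
      (nhds (∑' n, η.p n * (2 * cdf η n + η.p n))) :=
    (summable_sq η).hasSum.tendsto_sum_nat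
  have h2 : Tendsto (fun N => (cdf η N) ^ 2) atTop (nhds 1) := by
    have h3 : Tendsto (fun N => cdf η N) atTop (nhds 1) := η.total.tendsto_sum_nat
    simpa using h3.pow 2
  exact tendsto_nhds_unique (by simpa only [hpart] using h1) h2

lemma tsum_gt_tail (η : Strategy) (n : ℕ) :
    ∑' k, (if n < k then η.p k else 0) = 1 - cdf η (n + 1) := by
  have hs1 : Summable fun k => if n < k then η.p k else 0 :=
    Summable.of_nonneg_of_le (fun k => by split <;> simp [η.nonneg])
      (fun k => by split <;> simp [η.nonneg]) (psummable η)
  have hs2 : Summable fun k => if n < k then 0 else η.p k :=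
    Summable.of_nonneg_of_le (fun k => by split <;> simp [η.nonneg])
      (fun k => by split <;> simp [η.nonneg]) (psummable η)
  have hadd : ∀ k, (if n < k then η.p k else 0) + (if n < k then 0 else η.p k) = η.p k := by
    intro k; split <;> simp
  have hsum : (∑' k, (if n < k then η.p k else 0)) + ∑' k, (if n < k then 0 else η.p k) = 1 := by
    rw [← Summable.tsum_add hs1 hs2]
    simp_rw [hadd]
    exact η.total.tsum_eq
  have h2 : ∑' k, (if n < k then 0 else η.p k) = cdf η (n + 1) := by
    rw [tsum_eq_sum (s := range (n + 1)) (fun k hk => ?_)]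
    · exact Finset.sum_congr rfl fun k hk => by
        simp only [Finset.mem_range] at hk
        simp [Nat.not_lt.mpr (Nat.lt_succ_iff.mp hk)]
    · simp only [Finset.mem_range, not_lt] at hk
      simp [Nat.lt_of_succ_le hk]
  linarith


end APA
namespace APA
open Finset Filter

lemma prGT_swap (ξ η : Strategy) :
    prGT η ξ = ∑' n, ξ.p n * (1 - cdf η (n + 1)) := by
  classical
  set h : ℕ × ℕ → ℝ := fun p => if p.2 < p.1 then η.p p.1 * ξ.p p.2 else 0 with hh
  have hnn : ∀ p : ℕ × ℕ, 0 ≤ h p := by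
    intro p; simp only [hh]
    split
    · exact mul_nonneg (η.nonneg _) (ξ.nonneg _)
    · exact le_refl 0
  have hprod : Summable fun p : ℕ × ℕ => η.p p.1 * ξ.p p.2 :=
    (psummable η).mul_of_nonneg (psummable ξ) η.nonneg ξ.nonneg
  have hH : Summable h := by
    refine Summable.of_nonneg_of_le hnn (fun p => ?_) hprod
    simp only [hh]
    split
    · exact le_refl _
    · exact mul_nonneg (η.nonneg _) (ξ.nonneg _)
  have fib1 : ∀ k, Summable fun n => h (k, n) := by
    intro k
    refine summable_of_ne_finset_zero (s := range k) fun n hn => ?_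
    simp only [Finset.mem_range, not_lt] at hn
    simp [hh, Nat.not_lt.mpr hn]
  have fib2 : ∀ n, Summable fun k => h (k, n) := by
    intro n
    refine Summable.of_nonneg_of_le (fun k => hnn _) (fun k => ?_) ((psummable η).mul_right (ξ.p n))
    simp only [hh]
    split
    · exact le_refl _
    · exact mul_nonneg (η.nonneg _) (ξ.nonneg _)
  have stepA : ∀ k, η.p k * cdf ξ k = ∑' n, h (k, n) := by
    intro k
    have e1 : ∀ n, h (k, n) = η.p k * (if n < k then ξ.p n else 0) := by
      intro n; simp only [hh]; split <;> simp
    rw [tsum_congr e1, tsum_mul_left]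
    congr 1
    rw [tsum_eq_sum (s := range k) (fun n hn => by
      simp only [Finset.mem_range, not_lt] at hn
      simp [Nat.not_lt.mpr hn])]
    exact Finset.sum_congr rfl fun n hn => by
      simp only [Finset.mem_range] at hn
      simp [hn]
  have stepE : ∀ n, ∑' k, h (k, n) = ξ.p n * (1 - cdf η (n + 1)) := by
    intro n
    have e1 : ∀ k, h (k, n) = ξ.p n * (if n < k then η.p k else 0) := by
      intro k; simp only [hh]; split
      · ring
      · simp
    rw [tsum_congr e1, tsum_mul_left, tsum_gt_tail]
  have hC : prGT η ξ = ∑' p : ℕ × ℕ, h p := by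
    rw [show prGT η ξ = ∑' k, η.p k * cdf ξ k from rfl, tsum_congr stepA,
      ← Summable.tsum_prod' hH fun b => fib1 b]
  have hswap : Summable fun q : ℕ × ℕ => h (q.2, q.1) := by
    have := (Equiv.summable_iff (Equiv.prodComm ℕ ℕ)).mpr hH
    exact this
  have hD : ∑' p : ℕ × ℕ, h p = ∑' q : ℕ × ℕ, h (q.2, q.1) := by
    rw [← (Equiv.prodComm ℕ ℕ).tsum_eq h]
    rfl
  rw [hC, hD, Summable.tsum_prod' hswap fun n => fib2 n]
  exact tsum_congr stepE

lemma prEq_comm (ξ η : Strategy) : prEq η ξ = prEq ξ η := by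
  unfold prEq; exact tsum_congr fun n => mul_comm _ _

lemma summable_phi (ξ η : Strategy) : Summable fun n => ξ.p n * (2 * cdf η n + η.p n) := by
  have h : (fun n => ξ.p n * (2 * cdf η n + η.p n)) =
      fun n => 2 * (ξ.p n * cdf η n) + ξ.p n * η.p n := by funext n; ring
  rw [h]
  exact ((summable_mul_cdf ξ η).mul_left 2).add (summable_mul_p ξ η)

lemma AB_sum (ξ η : Strategy) :
    (∑' n, ξ.p n * (2 * cdf η n + η.p n)) + (∑' n, η.p n * (2 * cdf ξ n + ξ.p n)) = 2 := by
  have hA : ∑' n, ξ.p n * (2 * cdf η n + η.p n) = 2 * prGT ξ η + prEq ξ η := by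
    have e : ∀ n, ξ.p n * (2 * cdf η n + η.p n) = 2 * (ξ.p n * cdf η n) + ξ.p n * η.p n := by
      intro n; ring
    rw [tsum_congr e, Summable.tsum_add ((summable_mul_cdf ξ η).mul_left 2) (summable_mul_p ξ η),
      tsum_mul_left]
    rfl
  have hB : ∑' n, η.p n * (2 * cdf ξ n + ξ.p n) = 2 * prGT η ξ + prEq η ξ := by
    have e : ∀ n, η.p n * (2 * cdf ξ n + ξ.p n) = 2 * (η.p n * cdf ξ n) + η.p n * ξ.p n := by
      intro n; ring
    rw [tsum_congr e, Summable.tsum_add ((summable_mul_cdf η ξ).mul_left 2) (summable_mul_p η ξ),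
      tsum_mul_left]
    rfl
  have hswap : prGT η ξ = ∑' n, ξ.p n * (1 - cdf η (n + 1)) := prGT_swap ξ η
  have hcomb : prGT ξ η + prGT η ξ + prEq ξ η = 1 := by
    have s1 : Summable fun n => ξ.p n * (1 - cdf η (n + 1)) := by
      have h : (fun n => ξ.p n * (1 - cdf η (n + 1))) =
          fun n => ξ.p n - ξ.p n * cdf η (n + 1) := by funext n; ring
      rw [h]
      refine (psummable ξ).sub ?_
      refine Summable.of_nonneg_of_le (fun n => mul_nonneg (ξ.nonneg n) (cdf_nonneg η _))
        (fun n => ?_) (psummable ξ)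
      simpa using mul_le_mul_of_nonneg_left (cdf_le_one η (n + 1)) (ξ.nonneg n)
    have e : ∀ n, ξ.p n * cdf η n + ξ.p n * (1 - cdf η (n + 1)) + ξ.p n * η.p n = ξ.p n := by
      intro n
      rw [cdf_succ]
      ring
    calc prGT ξ η + prGT η ξ + prEq ξ η
        = (∑' n, ξ.p n * cdf η n) + (∑' n, ξ.p n * (1 - cdf η (n + 1))) + ∑' n, ξ.p n * η.p n := by
          rw [hswap]; rfl
      _ = ∑' n, (ξ.p n * cdf η n + ξ.p n * (1 - cdf η (n + 1)) + ξ.p n * η.p n) := by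
          rw [← Summable.tsum_add (summable_mul_cdf ξ η) s1, ← Summable.tsum_add ((summable_mul_cdf ξ η).add s1) (summable_mul_p ξ η)]
      _ = ∑' n, ξ.p n := tsum_congr e
      _ = 1 := ξ.total.tsum_eq
  have hpc := prEq_comm η ξ
  linarith

end APA
namespace APA
open Finset Filter

lemma gauss_sum : ∀ N : ℕ, ∑ n ∈ range N, (n : ℝ) = N * (N - 1) / 2 := by
  intro N
  induction N with
  | zero => simp
  | succ n ih => rw [sum_range_succ, ih]; push_cast; ring

lemma sum_cdf (η : Strategy) : ∀ N : ℕ, ∑ n ∈ range N, cdf η n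
    = ∑ k ∈ range N, ((N : ℝ) - 1 - k) * η.p k := by
  intro N
  induction N with
  | zero => simp
  | succ N ih =>
    rw [sum_range_succ, ih]
    have : ∀ k ∈ range N, ((N + 1 : ℕ) : ℝ) * η.p k - 1 * η.p k - k * η.p k
        = (((N:ℝ) - 1 - k) * η.p k) + η.p k := by
      intro k _; push_cast; ring
    rw [show cdf η N = ∑ k ∈ range N, η.p k from rfl, sum_range_succ]
    push_cast
    rw [Finset.sum_congr rfl (fun k _ => show ((N:ℝ) + 1 - 1 - k) * η.p k = ((N:ℝ) - 1 - k) * η.p k + η.p k by ring), Finset.sum_add_distrib]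
    ring

lemma exp_eq (η : Strategy) : η.exp = ∑' n : ℕ, (n : ℝ) * η.p n := rfl

set_option maxHeartbeats 1000000 in
lemma extract (v : ℝ) (hv : 0 < v) (m : ℕ) (hm : 1 ≤ m) (Y : Strategy)
    (hYe : Y.exp = (m : ℝ))
    (hb : ∀ n : ℕ, g v Y n ≤ v / 2 - m) :
    (2 * (m : ℝ) ≤ v ∧ v ≤ 2 * m + 2) ∧
    ∀ n, Y.p n = if n ≤ 2 * m then
        (if Even n then 1 - 2 * m / v else (2 * m + 2) / v - 1) else 0 := by
  set N : ℕ := 2 * m + 1 with hN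
  clear_value N
  -- coefficient sum over all of ℕ
  have scoef : Summable fun k : ℕ => (2 * (N : ℝ) - 1 - 2 * k) * Y.p k := by
    have e : (fun k : ℕ => (2 * (N : ℝ) - 1 - 2 * k) * Y.p k)
        = fun k : ℕ => (2 * (N : ℝ) - 1) * Y.p k - 2 * ((k : ℝ) * Y.p k) := by
      funext k; ring
    rw [e]
    exact ((psummable Y).mul_left _).sub (Y.finExp.mul_left 2)
  have tcoef : ∑' k : ℕ, (2 * (N : ℝ) - 1 - 2 * k) * Y.p k = 2 * m + 1 := by
    have e : ∀ k : ℕ, (2 * (N : ℝ) - 1 - 2 * k) * Y.p k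
        = (2 * (N : ℝ) - 1) * Y.p k - 2 * ((k : ℝ) * Y.p k) := by
      intro k; ring
    rw [tsum_congr e, Summable.tsum_sub ((psummable Y).mul_left _) (Y.finExp.mul_left 2),
      tsum_mul_left, tsum_mul_left, Y.total.tsum_eq, ← exp_eq, hYe]
    push_cast [hN]
    ring
  set T : ℝ := ∑' i : ℕ, (1 + 2 * (i : ℝ)) * Y.p (i + N) with hT
  clear_value T
  have sT : Summable fun i : ℕ => (1 + 2 * (i : ℝ)) * Y.p (i + N) := by
    have h1 : Summable fun i : ℕ => (2 * (N : ℝ) - 1 - 2 * ((i + N : ℕ) : ℝ)) * Y.p (i + N) :=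
      (summable_nat_add_iff N).mpr scoef
    have e : (fun i : ℕ => (1 + 2 * (i : ℝ)) * Y.p (i + N))
        = fun i : ℕ => -((2 * (N : ℝ) - 1 - 2 * ((i + N : ℕ) : ℝ)) * Y.p (i + N)) := by
      funext i; push_cast; ring
    rw [e]; exact h1.neg
  have hsplit : ∑ k ∈ range N, (2 * (N : ℝ) - 1 - 2 * k) * Y.p k - T = 2 * m + 1 := by
    have := scoef.sum_add_tsum_nat_add N
    rw [tcoef] at this
    have e : ∑' i : ℕ, (2 * (N : ℝ) - 1 - 2 * ((i + N : ℕ) : ℝ)) * Y.p (i + N) = -T := by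
      rw [hT, ← tsum_neg]
      exact tsum_congr fun i => by push_cast; ring
    rw [e] at this
    linarith
  have hTnn : 0 ≤ T := by
    rw [hT]
    exact tsum_nonneg fun i => mul_nonneg (by positivity) (Y.nonneg _)
  -- sum of g over range N
  have hsumg : ∑ n ∈ range N, g v Y n = v / 2 * ((2 * m + 1) + T) - m * (2 * m + 1) := by
    have e1 : ∑ n ∈ range N, g v Y n
        = v * (∑ n ∈ range N, cdf Y n) + v / 2 * (∑ n ∈ range N, Y.p n)
          - ∑ n ∈ range N, (n : ℝ) := by
      unfold g
      rw [Finset.mul_sum, Finset.mul_sum, ← Finset.sum_add_distrib, ← Finset.sum_sub_distrib]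
    rw [e1, sum_cdf, gauss_sum]
    have e2 : v * (∑ k ∈ range N, ((N : ℝ) - 1 - k) * Y.p k) + v / 2 * ∑ n ∈ range N, Y.p n
        = v / 2 * ∑ k ∈ range N, (2 * (N : ℝ) - 1 - 2 * k) * Y.p k := by
      rw [Finset.mul_sum, Finset.mul_sum, Finset.mul_sum, ← Finset.sum_add_distrib]
      exact Finset.sum_congr rfl fun k _ => by ring
    rw [e2, show ∑ k ∈ range N, (2 * (N : ℝ) - 1 - 2 * k) * Y.p k = (2 * m + 1) + T by linarith]
    simp only [hN]
    push_cast
    ring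
  have hble : ∑ n ∈ range N, g v Y n ≤ N * (v / 2 - m) := by
    calc ∑ n ∈ range N, g v Y n ≤ ∑ n ∈ range N, (v / 2 - (m : ℝ)) :=
          Finset.sum_le_sum fun n _ => hb n
      _ = N * (v / 2 - m) := by rw [Finset.sum_const, card_range, nsmul_eq_mul]
  have hNr : (N : ℝ) = 2 * m + 1 := by simp only [hN]; push_cast; ring
  have hT0 : T = 0 := by
    rw [hsumg, hNr] at hble
    have h1 : v / 2 * T ≤ 0 := by nlinarith [hble]
    nlinarith [hTnn, hv]
  -- tail is zero
  have hzero : ∀ k, N ≤ k → Y.p k = 0 := by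
    intro k hk
    have hterm : ∀ i : ℕ, (1 + 2 * (i : ℝ)) * Y.p (i + N) ≤ 0 := by
      intro i
      have := Summable.le_tsum sT i (fun j _ => mul_nonneg (by positivity) (Y.nonneg _))
      rw [← hT, hT0] at this
      exact this
    have h2 := hterm (k - N)
    have h3 : k - N + N = k := Nat.sub_add_cancel hk
    rw [h3] at h2
    have h4 : 0 ≤ (1 + 2 * ((k - N : ℕ) : ℝ)) * Y.p k := mul_nonneg (by positivity) (Y.nonneg _)
    have h5 : (1 + 2 * ((k - N : ℕ) : ℝ)) * Y.p k = 0 := le_antisymm h2 h4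
    have h6 : (0:ℝ) < 1 + 2 * ((k - N : ℕ) : ℝ) := by positivity
    exact (mul_eq_zero.mp h5).resolve_left (ne_of_gt h6) 
  -- equality of g on range N
  have heq : ∀ n, n ≤ 2 * m → g v Y n = v / 2 - m := by
    have hsum0 : ∑ n ∈ range N, ((v / 2 - (m : ℝ)) - g v Y n) = 0 := by
      rw [Finset.sum_sub_distrib, Finset.sum_const, card_range, hsumg, hT0]
      simp only [hN]
      push_cast
      ring
    have hall := (Finset.sum_eq_zero_iff_of_nonneg
      (fun n _ => sub_nonneg.mpr (hb n))).mp hsum0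
    intro n hn
    have hn' : n ∈ range N := by rw [Finset.mem_range, hN]; omega
    have := hall n hn'
    linarith [this]
  have cdf0 : cdf Y 0 = 0 := by simp [cdf]
  have hvne : v ≠ 0 := ne_of_gt hv
  have hy0 : Y.p 0 = 1 - 2 * m / v := by
    have h0 := heq 0 (by omega)
    unfold g at h0
    rw [cdf0] at h0
    push_cast at h0
    have hs : 2 * (m:ℝ) / v = 1 - Y.p 0 := by
      rw [div_eq_iff hvne]; linear_combination 2 * h0
    linarith
  have hrec : ∀ n, n + 1 ≤ 2 * m → Y.p (n + 1) = 2 / v - Y.p n := by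
    intro n hn
    have h1 := heq n (by omega)
    have h2 := heq (n + 1) hn
    unfold g at h1 h2
    rw [cdf_succ] at h2
    push_cast at h1 h2
    have hs : (2:ℝ) / v = Y.p n + Y.p (n + 1) := by
      rw [div_eq_iff hvne]; linear_combination 2 * h1 - 2 * h2
    linarith
  have hform : ∀ n, n ≤ 2 * m →
      Y.p n = if Even n then 1 - 2 * m / v else (2 * m + 2) / v - 1 := by
    intro n
    induction n with
    | zero => intro _; simp [hy0]
    | succ n ih =>
      intro hn
      have hyn := ih (by omega)
      have := hrec n hn
      have hsum : (1 - 2 * (m:ℝ) / v) + ((2 * m + 2) / v - 1) = 2 / v := by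
        have h2 : (2 * (m:ℝ) + 2) / v - 2 * (m:ℝ) / v = 2 / v := by
          rw [div_sub_div_same]
          norm_num
        linarith
      rcases Nat.even_or_odd n with he | ho
      · rw [if_pos he] at hyn
        rw [if_neg (fun h => (Nat.even_add_one.mp h) he)]
        rw [this, hyn]
        linarith
      · have hne : ¬Even n := Nat.not_even_iff_odd.mpr ho
        rw [if_neg hne] at hyn
        rw [if_pos (Nat.even_add_one.mpr hne)]
        rw [this, hyn]
        linarith
  have hfinal : ∀ n, Y.p n = if n ≤ 2 * m then
      (if Even n then 1 - 2 * m / v else (2 * m + 2) / v - 1) else 0 := by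
    intro n
    by_cases hn : n ≤ 2 * m
    · rw [if_pos hn]; exact hform n hn
    · rw [if_neg hn]; exact hzero n (by omega)
  refine ⟨⟨?_, ?_⟩, hfinal⟩
  · have h0 := Y.nonneg 0
    rw [hy0] at h0
    have : 2 * (m : ℝ) / v ≤ 1 := by linarith
    calc 2 * (m : ℝ) = 2 * (m:ℝ) / v * v := by field_simp
      _ ≤ 1 * v := mul_le_mul_of_nonneg_right this (le_of_lt hv)
      _ = v := one_mul v
  · have h1 := Y.nonneg 1
    rw [hform 1 (by omega), if_neg (by simp)] at h1
    have : 1 ≤ (2 * (m:ℝ) + 2) / v := by linarith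
    calc v = 1 * v := (one_mul v).symm
      _ ≤ (2 * (m:ℝ) + 2) / v * v := mul_le_mul_of_nonneg_right this (le_of_lt hv)
      _ = 2 * m + 2 := by field_simp

end APA
namespace APA
open Finset

lemma closed_form_eq (m : ℕ) (v : ℝ) (hm : 1 ≤ m) (hv : 0 < v) (n : ℕ) :
    (2 * (m : ℝ) / v) * ((m : ℝ) + 1 - v / 2) * UO m n +
      (1 - (2 * (m : ℝ) / v) * ((m : ℝ) + 1 - v / 2)) * UE m n
    = if n ≤ 2 * m then (if Even n then 1 - 2 * m / v else (2 * m + 2) / v - 1) else 0 := by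
  have hvne : v ≠ 0 := ne_of_gt hv
  have hmne : (m : ℝ) ≠ 0 := Nat.cast_ne_zero.mpr (by omega)
  have hm1 : (m : ℝ) + 1 ≠ 0 := by positivity
  unfold UO UE
  rcases Nat.even_or_odd n with he | ho
  · have h1 : ¬(Odd n ∧ n < 2 * m) := fun hh => (Nat.not_even_iff_odd.mpr hh.1) he
    rw [if_neg h1]
    by_cases h2 : n ≤ 2 * m
    · rw [if_pos ⟨he, h2⟩, if_pos h2, if_pos he]
      field_simp
      ring
    · rw [if_neg (fun hh : Even n ∧ n ≤ 2 * m => h2 hh.2), if_neg h2]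
      ring
  · have hne : ¬Even n := Nat.not_even_iff_odd.mpr ho
    by_cases h2 : n < 2 * m
    · rw [if_pos ⟨ho, h2⟩, if_neg (fun hh : Even n ∧ n ≤ 2 * m => hne hh.1),
        if_pos (le_of_lt h2), if_neg hne]
      field_simp
      ring
    · have h3 : ¬ n ≤ 2 * m := by
        have := Nat.odd_iff.mp ho
        omega
      rw [if_neg (fun hh : Odd n ∧ n < 2 * m => h2 hh.2),
        if_neg (fun hh : Even n ∧ n ≤ 2 * m => hne hh.1), if_neg h3]
      ring

lemma g_of_closed (v : ℝ) (m : ℕ) (hm : 1 ≤ m) (hv : 0 < v)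
    (hva : 2 * (m : ℝ) ≤ v) (hvb : v ≤ 2 * m + 2) (Y : Strategy)
    (hp : ∀ n, Y.p n = if n ≤ 2 * m then
        (if Even n then 1 - 2 * m / v else (2 * m + 2) / v - 1) else 0) :
    (∀ n, g v Y n ≤ v / 2 - m) ∧ (∀ n, n ≤ 2 * m → g v Y n = v / 2 - m) := by
  have hvne : v ≠ 0 := ne_of_gt hv
  have hcdf : ∀ n, n ≤ 2 * m + 1 →
      cdf Y n = if Even n then (n : ℝ) / v else ((n : ℝ) - 1) / v + (1 - 2 * m / v) := by
    intro n
    induction n with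
    | zero => intro _; simp [cdf]
    | succ n ih =>
      intro hn
      have hn' : n ≤ 2 * m := by omega
      have hc := ih (by omega)
      rw [cdf_succ, hp n, if_pos hn']
      rcases Nat.even_or_odd n with he | ho
      · rw [if_pos he] at hc ⊢
        rw [if_neg (fun h => (Nat.even_add_one.mp h) he), hc]
        push_cast
        ring
      · have hne : ¬Even n := Nat.not_even_iff_odd.mpr ho
        rw [if_neg hne] at hc ⊢
        rw [if_pos (Nat.even_add_one.mpr hne), hc]
        push_cast
        field_simp
        ring
  have hcdf1 : cdf Y (2 * m + 1) = 1 := by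
    have h := hcdf (2 * m + 1) (le_refl _)
    have hodd : ¬Even (2 * m + 1) := by simp [Nat.even_add_one, Nat.even_mul]
    rw [if_neg hodd] at h
    rw [h]
    push_cast
    field_simp
    ring
  have hcdftop : ∀ n, 2 * m + 1 ≤ n → cdf Y n = 1 := by
    intro n hn
    induction n, hn using Nat.le_induction with
    | base => exact hcdf1
    | succ n hn ih =>
      rw [cdf_succ, ih, hp n, if_neg (by omega)]
      ring
  have hzero : ∀ n, ¬ n ≤ 2 * m → Y.p n = 0 := fun n hn => by rw [hp n, if_neg hn]
  constructor
  · intro n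
    by_cases hn : n ≤ 2 * m
    · -- equality case handled below; prove ≤ via equality
      have heq : g v Y n = v / 2 - m := by
        unfold g
        rw [hcdf n (by omega), hp n, if_pos hn]
        rcases Nat.even_or_odd n with he | ho
        · rw [if_pos he, if_pos he]
          field_simp
          ring
        · have hne : ¬Even n := Nat.not_even_iff_odd.mpr ho
          rw [if_neg hne, if_neg hne]
          field_simp
          ring
      rw [heq]
    · unfold g
      rw [hcdftop n (by omega), hzero n hn]
      have : (2 * m + 1 : ℝ) ≤ (n : ℝ) := by
        have : (2 * m + 1 : ℕ) ≤ n := by omega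
        exact_mod_cast this
      nlinarith
  · intro n hn
    unfold g
    rw [hcdf n (by omega), hp n, if_pos hn]
    rcases Nat.even_or_odd n with he | ho
    · rw [if_pos he, if_pos he]
      field_simp
      ring
    · have hne : ¬Even n := Nat.not_even_iff_odd.mpr ho
      rw [if_neg hne, if_neg hne]
      field_simp
      ring

end APA
namespace APA
open Finset

lemma payoff_phi (v : ℝ) (ξ η : Strategy) :
    payoff v ξ η = v / 2 * (∑' n, ξ.p n * (2 * cdf η n + η.p n)) - ξ.exp := by
  have hA : ∑' n, ξ.p n * (2 * cdf η n + η.p n) = 2 * prGT ξ η + prEq ξ η := by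
    have e : ∀ n, ξ.p n * (2 * cdf η n + η.p n) = 2 * (ξ.p n * cdf η n) + ξ.p n * η.p n := by
      intro n; ring
    rw [tsum_congr e, Summable.tsum_add ((summable_mul_cdf ξ η).mul_left 2) (summable_mul_p ξ η),
      tsum_mul_left]
    rfl
  rw [hA]
  unfold payoff
  ring

lemma self_weighted_g (v : ℝ) (m : ℕ) (Y : Strategy) (hY : Y.exp = (m : ℝ)) :
    ∑' n, Y.p n * g v Y n = v / 2 - m := by
  have e : ∀ n, Y.p n * g v Y n
      = v / 2 * (Y.p n * (2 * cdf Y n + Y.p n)) - (n : ℝ) * Y.p n := by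
    intro n; unfold g; ring
  rw [tsum_congr e, Summable.tsum_sub ((summable_sq Y).mul_left _) Y.finExp, tsum_mul_left, tsum_sq,
    ← exp_eq, hY]
  ring

lemma nash_payoffs (v1 v2 : ℝ) (hv1 : 0 < v1) (hv2 : 0 < v2) (m : ℕ) (X Y : Strategy)
    (hX : X.exp = (m : ℝ)) (hY : Y.exp = (m : ℝ))
    (h1 : ∀ n, g v1 Y n ≤ payoff v1 X Y) (h2 : ∀ n, g v2 X n ≤ payoff v2 Y X) :
    payoff v1 X Y = v1 / 2 - m ∧ payoff v2 Y X = v2 / 2 - m := by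
  set A := ∑' n, X.p n * (2 * cdf Y n + Y.p n) with hA
  set B := ∑' n, Y.p n * (2 * cdf X n + X.p n) with hB
  have hAB : A + B = 2 := AB_sum X Y
  have hPA : payoff v1 X Y = v1 / 2 * A - m := by rw [payoff_phi, hX, hA]
  have hPB : payoff v2 Y X = v2 / 2 * B - m := by rw [payoff_phi, hY, hB]
  have hle1 : v1 / 2 - m ≤ payoff v1 X Y := by
    rw [← self_weighted_g v1 m Y hY]
    exact tsum_weights_le Y _ _ (summable_mul_g v1 Y Y) h1
  have hle2 : v2 / 2 - m ≤ payoff v2 Y X := by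
    rw [← self_weighted_g v2 m X hX]
    exact tsum_weights_le X _ _ (summable_mul_g v2 X X) h2
  rw [hPA] at hle1 ⊢
  rw [hPB] at hle2 ⊢
  have hA1 : 1 ≤ A := by nlinarith
  have hB1 : 1 ≤ B := by nlinarith
  have hAeq : A = 1 := by linarith
  have hBeq : B = 1 := by linarith
  rw [hAeq, hBeq]
  constructor <;> ring

lemma floor_eq_iff' (v : ℝ) (m : ℕ) :
    ((m : ℤ) = ⌊v / 2⌋) ↔ (2 * (m : ℝ) ≤ v ∧ v < 2 * m + 2) := by
  rw [eq_comm, Int.floor_eq_iff]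
  constructor
  · rintro ⟨a, b⟩
    push_cast at a b
    constructor <;> linarith
  · rintro ⟨a, b⟩
    constructor <;> push_cast <;> linarith

lemma ceil_eq_iff' (v : ℝ) (m : ℕ) :
    ((m : ℤ) = ⌈v / 2⌉ - 1) ↔ (2 * (m : ℝ) < v ∧ v ≤ 2 * m + 2) := by
  have h : ((m : ℤ) = ⌈v / 2⌉ - 1) ↔ (⌈v / 2⌉ = (m : ℤ) + 1) := by omega
  rw [h, Int.ceil_eq_iff]
  constructor
  · rintro ⟨a, b⟩
    push_cast at a b
    constructor <;> linarith
  · rintro ⟨a, b⟩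
    constructor <;> push_cast <;> linarith

lemma condA_iff (v1 v2 : ℝ) (m : ℕ) (hv : v2 ≤ v1) :
    ((((m : ℤ) = ⌊v2 / 2⌋ ∧ (m : ℤ) = ⌊v1 / 2⌋) ∨
      ((m : ℤ) = ⌈v2 / 2⌉ - 1 ∧ (m : ℤ) = ⌈v1 / 2⌉ - 1) ∨
      ((m : ℤ) = ⌊v2 / 2⌋ ∧ (m : ℤ) = ⌈v1 / 2⌉ - 1)))
    ↔ (2 * (m : ℝ) ≤ v2 ∧ v1 ≤ 2 * (m : ℝ) + 2) := by
  rw [floor_eq_iff', floor_eq_iff', ceil_eq_iff', ceil_eq_iff']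
  constructor
  · rintro (⟨⟨a, b⟩, ⟨c, d⟩⟩ | ⟨⟨a, b⟩, ⟨c, d⟩⟩ | ⟨⟨a, b⟩, ⟨c, d⟩⟩) <;> constructor <;> linarith
  · rintro ⟨a, b⟩
    rcases lt_or_ge v1 (2 * (m : ℝ) + 2) with h1 | h1
    · exact Or.inl ⟨⟨a, by linarith⟩, ⟨by linarith, h1⟩⟩
    · have h1' : v1 = 2 * (m : ℝ) + 2 := le_antisymm b h1
      rcases eq_or_lt_of_le a with h2 | h2
      · exact Or.inr (Or.inr ⟨⟨a, by linarith⟩, ⟨by linarith, b⟩⟩)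
      · exact Or.inr (Or.inl ⟨⟨h2, by linarith⟩, ⟨by linarith, b⟩⟩)

end APA

/-- Proposition 5: equilibria with `E(X) = E(Y) = m`, `m ≥ 1`. -/
theorem allpay_eq_exp_int (v1 v2 : ℝ) (hv2 : 0 < v2) (hv : v2 ≤ v1)
    (m : ℕ) (hm : 1 ≤ m) (X Y : Strategy)
    (hX : X.exp = (m : ℝ)) (hY : Y.exp = (m : ℝ)) :
    (IsNashAPA v1 v2 X Y ↔
      ((((m : ℤ) = ⌊v2 / 2⌋ ∧ (m : ℤ) = ⌊v1 / 2⌋) ∨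
        ((m : ℤ) = ⌈v2 / 2⌉ - 1 ∧ (m : ℤ) = ⌈v1 / 2⌉ - 1) ∨
        ((m : ℤ) = ⌊v2 / 2⌋ ∧ (m : ℤ) = ⌈v1 / 2⌉ - 1)) ∧
       (∀ n, X.p n = (2 * (m : ℝ) / v2) * ((m : ℝ) + 1 - v2 / 2) * UO m n +
          (1 - (2 * (m : ℝ) / v2) * ((m : ℝ) + 1 - v2 / 2)) * UE m n) ∧
       (∀ n, Y.p n = (2 * (m : ℝ) / v1) * ((m : ℝ) + 1 - v1 / 2) * UO m n +
          (1 - (2 * (m : ℝ) / v1) * ((m : ℝ) + 1 - v1 / 2)) * UE m n))) ∧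
    (IsNashAPA v1 v2 X Y →
      payoff v1 X Y = v1 / 2 - (m : ℝ) ∧ payoff v2 Y X = v2 / 2 - (m : ℝ)) := by
  
  have hv1 : 0 < v1 := lt_of_lt_of_le hv2 hv
  have hpay : IsNashAPA v1 v2 X Y →
      payoff v1 X Y = v1 / 2 - (m : ℝ) ∧ payoff v2 Y X = v2 / 2 - (m : ℝ) := by
    intro hN
    obtain ⟨hb1, hb2⟩ := (APA.nash_iff v1 v2 X Y).mp hN
    exact APA.nash_payoffs v1 v2 hv1 hv2 m X Y hX hY hb1 hb2
  refine ⟨⟨?_, ?_⟩, hpay⟩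
  · -- forward
    intro hN
    obtain ⟨hb1, hb2⟩ := (APA.nash_iff v1 v2 X Y).mp hN
    obtain ⟨hp1, hp2⟩ := hpay hN
    have hb1' : ∀ n, APA.g v1 Y n ≤ v1 / 2 - m := fun n => hp1 ▸ hb1 n
    have hb2' : ∀ n, APA.g v2 X n ≤ v2 / 2 - m := fun n => hp2 ▸ hb2 n
    obtain ⟨⟨hv1a, hv1b⟩, hYf⟩ := APA.extract v1 hv1 m hm Y hY hb1'
    obtain ⟨⟨hv2a, hv2b⟩, hXf⟩ := APA.extract v2 hv2 m hm X hX hb2'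
    refine ⟨(APA.condA_iff v1 v2 m hv).mpr ⟨hv2a, hv1b⟩, fun n => ?_, fun n => ?_⟩
    · rw [APA.closed_form_eq m v2 hm hv2 n]
      exact hXf n
    · rw [APA.closed_form_eq m v1 hm hv1 n]
      exact hYf n
  · -- backward
    rintro ⟨hcond, hXf, hYf⟩
    obtain ⟨hA2, hB2⟩ := (APA.condA_iff v1 v2 m hv).mp hcond
    have h2mv1 : 2 * (m : ℝ) ≤ v1 := le_trans hA2 hv
    have hv22 : v2 ≤ 2 * (m : ℝ) + 2 := le_trans hv hB2
    have hXf' : ∀ n, X.p n = if n ≤ 2 * m then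
        (if Even n then 1 - 2 * m / v2 else (2 * m + 2) / v2 - 1) else 0 := fun n => by
      rw [hXf n, APA.closed_form_eq m v2 hm hv2 n]
    have hYf' : ∀ n, Y.p n = if n ≤ 2 * m then
        (if Even n then 1 - 2 * m / v1 else (2 * m + 2) / v1 - 1) else 0 := fun n => by
      rw [hYf n, APA.closed_form_eq m v1 hm hv1 n]
    obtain ⟨hgle2, hgeq2⟩ := APA.g_of_closed v2 m hm hv2 hA2 hv22 X hXf'
    obtain ⟨hgle1, hgeq1⟩ := APA.g_of_closed v1 m hm hv1 h2mv1 hB2 Y hYf'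
    have hsuppX : ∀ n, ¬ n ≤ 2 * m → X.p n = 0 := fun n hn => by rw [hXf' n, if_neg hn]
    have hsuppY : ∀ n, ¬ n ≤ 2 * m → Y.p n = 0 := fun n hn => by rw [hYf' n, if_neg hn]
    have hpay1 : payoff v1 X Y = v1 / 2 - m := by
      rw [APA.payoff_eq]
      have e : ∀ n, X.p n * APA.g v1 Y n = X.p n * (v1 / 2 - m) := by
        intro n
        by_cases hn : n ≤ 2 * m
        · rw [hgeq1 n hn]
        · rw [hsuppX n hn]; ring
      rw [tsum_congr e, tsum_mul_right, X.total.tsum_eq, one_mul]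
    have hpay2 : payoff v2 Y X = v2 / 2 - m := by
      rw [APA.payoff_eq]
      have e : ∀ n, Y.p n * APA.g v2 X n = Y.p n * (v2 / 2 - m) := by
        intro n
        by_cases hn : n ≤ 2 * m
        · rw [hgeq2 n hn]
        · rw [hsuppY n hn]; ring
      rw [tsum_congr e, tsum_mul_right, Y.total.tsum_eq, one_mul]
    rw [APA.nash_iff]
    exact ⟨fun n => hpay1 ▸ hgle1 n, fun n => hpay2 ▸ hgle2 n⟩
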